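/- Separation bound for the packing functions: with g_a as above, if a, a' ∈ {0,1}ⁿ satisfy Hamming distance d_h(a,a') ≥ ⌊n/16⌋ then ∫_{1/12}^{7/12} |g_a(x) − g_{a'}(x)|² dx ≥ d_h(a,a') · (1/(2n)) · (4/(3n))² ≥ (1/384)·n^{-2} for n ≥ 16. -/

import Mathlib

open MeasureTheory Set

lemma aux_sq (n : ℝ) (hn : 0 < n) (t : ℝ) (b b' : Bool) (hb : b ≠ b') :
    ((4/3) * (t + (if b then 1 else 0)/n) + 1/2
      - ((4/3) * (t + (if b' then 1 else 0)/n) + 1/2))^2 = (4/(3*n))^2 := by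
  rcases b <;> rcases b' <;> simp_all <;> field_simp <;> ring

lemma aux_const_integral {f : ℝ → ℝ} {c p q : ℝ} (hpq : p < q)
    (h : Set.EqOn f (fun _ => c) (Ico p q)) :
    (∫ x in p..q, f x) = c * (q - p) ∧ IntervalIntegrable f volume p q := by
  have hsub : Ioo p q ⊆ Ico p q := Ioo_subset_Ico_self
  have heq : Set.EqOn f (fun _ => c) (Ioo p q) := h.mono hsub
  have hint : IntervalIntegrable f volume p q := by
    rw [intervalIntegrable_iff_integrableOn_Ioo_of_le hpq.le]
    exact (integrableOn_const (by rw [Real.volume_Ioo]; exact ENNReal.ofReal_ne_top)).congr_fun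
      heq.symm measurableSet_Ioo
  refine ⟨?_, hint⟩
  rw [intervalIntegral.integral_of_le hpq.le, ← setIntegral_congr_set Ioo_ae_eq_Ioc,
    setIntegral_congr_fun measurableSet_Ioo heq, setIntegral_const, measureReal_def, Real.volume_Ioo,
    ENNReal.toReal_ofReal (by linarith), smul_eq_mul, mul_comm]

/-- Separation bound for the packing step functions in terms of the Hamming
distance of the labels. -/
theorem stmt_16 (n : ℕ) (hn : 16 ≤ n) (a a' : Fin n → Bool) (g g' : ℝ → ℝ)
    (hg : ∀ k : Fin n, ∀ x ∈ Ico ((k.val : ℝ) / (2 * n) + 1/12)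
        (((k.val : ℝ) + 1) / (2 * n) + 1/12),
      g x = (4/3) * (((n : ℝ) - (k.val : ℝ)) / n + (if a k then 1 else 0) / n) + 1/2)
    (hg' : ∀ k : Fin n, ∀ x ∈ Ico ((k.val : ℝ) / (2 * n) + 1/12)
        (((k.val : ℝ) + 1) / (2 * n) + 1/12),
      g' x = (4/3) * (((n : ℝ) - (k.val : ℝ)) / n + (if a' k then 1 else 0) / n) + 1/2)
    (hdist : n / 16 ≤ hammingDist a a') :
    (hammingDist a a' : ℝ) * (1 / (2 * n)) * (4 / (3 * n)) ^ 2
        ≤ ∫ x in Ioo (1/12 : ℝ) (7/12), (g x - g' x) ^ 2 ∧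
    1 / (384 * (n : ℝ) ^ 2)
        ≤ (hammingDist a a' : ℝ) * (1 / (2 * n)) * (4 / (3 * n)) ^ 2 := by
  have hnR : (16:ℝ) ≤ n := by exact_mod_cast hn
  have hn0 : (0:ℝ) < n := by linarith
  have h2n : (0:ℝ) < 2 * n := by positivity
  set L : ℕ → ℝ := fun k => (k : ℝ) / (2 * n) + 1/12 with hL
  have hvol : ∀ k : ℕ, L (k+1) - L k = 1 / (2 * n) := by
    intro k; simp only [hL]; push_cast; ring
  have hmono : ∀ k : ℕ, L k < L (k+1) := by
    intro k
    simp only [hL]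
    push_cast
    apply add_lt_add_left
    rw [div_lt_div_iff₀ h2n h2n]
    nlinarith
  -- value and integrability on each subinterval
  have hkey : ∀ k : Fin n,
      (∫ x in (L k.val)..(L (k.val+1)), (g x - g' x)^2)
        = (if a k = a' k then 0 else (4 / (3 * (n:ℝ))) ^ 2) * (1 / (2*n)) ∧
      IntervalIntegrable (fun x => (g x - g' x)^2) volume (L k.val) (L (k.val+1)) := by
    intro k
    have hEq : Set.EqOn (fun x => (g x - g' x)^2)
        (fun _ => (if a k = a' k then 0 else (4 / (3 * (n:ℝ))) ^ 2))
        (Ico (L k.val) (L (k.val+1))) := by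
      intro x hx
      have hx' : x ∈ Ico ((k.val : ℝ) / (2 * n) + 1/12) (((k.val : ℝ) + 1) / (2 * n) + 1/12) := by
        simpa [hL] using hx
      have h1 := hg k x hx'
      have h2 := hg' k x hx'
      simp only [h1, h2]
      by_cases h : a k = a' k
      · rw [if_pos h, h, sub_self]
        ring
      · rw [if_neg h]
        exact aux_sq n hn0 (((n:ℝ) - k.val)/n) (a k) (a' k) h
    have := aux_const_integral (hmono k.val) hEq
    rw [hvol k.val] at this
    exact this
  have hsum : ∑ k ∈ Finset.range n, ∫ x in (L k)..(L (k+1)), (g x - g' x)^2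
      = ∫ x in (L 0)..(L n), (g x - g' x)^2 := by
    apply intervalIntegral.sum_integral_adjacent_intervals
    intro k hk
    exact (hkey ⟨k, hk⟩).2
  have hL0 : L 0 = 1/12 := by simp [hL]
  have hLn : L n = 7/12 := by
    simp only [hL]; field_simp; ring
  have htotal : (∫ x in Ioo (1/12 : ℝ) (7/12), (g x - g' x)^2)
      = (hammingDist a a' : ℝ) * (1 / (2 * n)) * (4 / (3 * n)) ^ 2 := by
    have h1 : (∫ x in Ioo (1/12 : ℝ) (7/12), (g x - g' x)^2)
        = ∫ x in (L 0)..(L n), (g x - g' x)^2 := by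
      rw [intervalIntegral.integral_of_le (by rw [hL0, hLn]; norm_num),
        ← setIntegral_congr_set Ioo_ae_eq_Ioc, hL0, hLn]
    rw [h1, ← hsum]
    rw [Finset.sum_range fun k => ∫ x in (L k)..(L (k+1)), (g x - g' x)^2]
    calc ∑ k : Fin n, ∫ x in (L k.val)..(L (k.val+1)), (g x - g' x)^2
        = ∑ k : Fin n, (if a k = a' k then 0 else (4 / (3 * (n:ℝ))) ^ 2) * (1 / (2*(n:ℝ))) :=
          Finset.sum_congr rfl fun k _ => (hkey k).1
      _ = (∑ k : Fin n, if a k = a' k then 0 else (4 / (3 * (n:ℝ))) ^ 2) * (1 / (2*(n:ℝ))) := by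
          rw [Finset.sum_mul]
      _ = (hammingDist a a' : ℝ) * (4 / (3 * (n:ℝ))) ^ 2 * (1 / (2*(n:ℝ))) := by
          rw [Finset.sum_ite, Finset.sum_const_zero, Finset.sum_const, zero_add, nsmul_eq_mul]
          congr 3
      _ = (hammingDist a a' : ℝ) * (1 / (2 * n)) * (4 / (3 * n)) ^ 2 := by ring
  constructor
  · exact le_of_eq htotal.symm
  · have hd : (n:ℝ) ≤ 16 * (hammingDist a a' : ℝ) + 15 := by
      have h2 : n ≤ 16 * hammingDist a a' + 15 := by omega
      exact_mod_cast h2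
    rw [div_le_iff₀ (by positivity)]
    have hd0 : (0:ℝ) ≤ (hammingDist a a' : ℝ) := Nat.cast_nonneg _
    rw [show (hammingDist a a' : ℝ) * (1 / (2 * n)) * (4 / (3 * n)) ^ 2
        = (hammingDist a a' : ℝ) * 8 / (9 * n^3) by field_simp; ring]
    rw [div_mul_eq_mul_div, le_div_iff₀ (by positivity)]
    nlinarith [sq_nonneg ((n:ℝ))]
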